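/- Let 0 < d₁ < π and 0 < r < d₁/2. Then (∫_{d₁/2 − r}^{d₁/2 + r} sin(t)^{n−1} dt) / (∫_{d₁ − r}^{d₁ + r} sin(t)^{n−1} dt) ≥ 1/2ⁿ, for every integer n ≥ 1, provided d₁ + r ≤ π. -/
import Mathlib


open Real Set

/-- Spherical annulus volume ratio: for `0 < d₁ < π`, `0 < r < d₁/2`, `d₁ + r ≤ π`
and `n ≥ 1`,
`(∫_{d₁/2-r}^{d₁/2+r} sin^{n-1}) / (∫_{d₁-r}^{d₁+r} sin^{n-1}) ≥ 1/2ⁿ`. -/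
theorem stmt4 (n : ℕ) (hn : 1 ≤ n) (d₁ r : ℝ) (hd₀ : 0 < d₁) (hdπ : d₁ < π)
    (hr₀ : 0 < r) (hr : r < d₁ / 2) (hsum : d₁ + r ≤ π) :
    (∫ t in (d₁ / 2 - r)..(d₁ / 2 + r), Real.sin t ^ (n - 1)) /
      (∫ t in (d₁ - r)..(d₁ + r), Real.sin t ^ (n - 1)) ≥ 1 / 2 ^ n := by
  set m := n - 1 with hm
  have hcont : Continuous fun t : ℝ => Real.sin t ^ m := by continuity
  have hcont2 : Continuous fun s : ℝ => Real.sin (2 * s) ^ m := by continuity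
  have hcont3 : Continuous fun s : ℝ => (2 * Real.sin s) ^ m := by continuity
  have hdr : 0 < d₁ - r := by linarith
  -- denominator positive
  have hD : 0 < ∫ t in (d₁ - r)..(d₁ + r), Real.sin t ^ m := by
    apply intervalIntegral.intervalIntegral_pos_of_pos_on
      (hcont.intervalIntegrable _ _)
    · intro x hx
      have hx0 : 0 < Real.sin x :=
        Real.sin_pos_of_pos_of_lt_pi (by linarith [hx.1]) (by linarith [hx.2])
      positivity
    · linarith
  -- substitution
  have key : (2:ℝ) * ∫ s in ((d₁ - r)/2)..((d₁ + r)/2), Real.sin (2 * s) ^ m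
      = ∫ t in (d₁ - r)..(d₁ + r), Real.sin t ^ m := by
    rw [intervalIntegral.integral_comp_mul_left (fun t => Real.sin t ^ m) (two_ne_zero)]
    rw [smul_eq_mul, mul_div_cancel₀ _ (two_ne_zero), mul_div_cancel₀ _ (two_ne_zero)]
    ring
  -- pointwise bound
  have step1 : (∫ s in ((d₁ - r)/2)..((d₁ + r)/2), Real.sin (2 * s) ^ m)
      ≤ ∫ s in ((d₁ - r)/2)..((d₁ + r)/2), (2 * Real.sin s) ^ m := by
    apply intervalIntegral.integral_mono_on (by linarith)
      (hcont2.intervalIntegrable _ _) (hcont3.intervalIntegrable _ _)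
    intro x hx
    have hx1 : 0 ≤ x := by have := hx.1; linarith
    have hx2 : x ≤ π / 2 := by have := hx.2; linarith
    have hs1 : 0 ≤ Real.sin (2 * x) :=
      Real.sin_nonneg_of_nonneg_of_le_pi (by linarith) (by linarith)
    have hs2 : Real.sin (2 * x) ≤ 2 * Real.sin x := by
      rw [Real.sin_two_mul]
      have hcos : Real.cos x ≤ 1 := Real.cos_le_one x
      have hsin : 0 ≤ Real.sin x := Real.sin_nonneg_of_nonneg_of_le_pi hx1 (by linarith [Real.pi_pos])
      nlinarith
    exact pow_le_pow_left₀ hs1 hs2 m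
  have step2 : (∫ s in ((d₁ - r)/2)..((d₁ + r)/2), (2 * Real.sin s) ^ m)
      = 2 ^ m * ∫ s in ((d₁ - r)/2)..((d₁ + r)/2), Real.sin s ^ m := by
    simp_rw [mul_pow]
    rw [intervalIntegral.integral_const_mul]
  have step3 : (∫ s in ((d₁ - r)/2)..((d₁ + r)/2), Real.sin s ^ m)
      ≤ ∫ t in (d₁ / 2 - r)..(d₁ / 2 + r), Real.sin t ^ m := by
    apply intervalIntegral.integral_mono_interval (by linarith) (by linarith) (by linarith)
      _ (hcont.intervalIntegrable _ _)
    filter_upwards [MeasureTheory.ae_restrict_mem measurableSet_Ioc] with x hx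
    have hsin : 0 ≤ Real.sin x :=
      Real.sin_nonneg_of_nonneg_of_le_pi (by linarith [hx.1]) (by linarith [hx.2])
    positivity
  -- numerator nonneg follows from step3 chain; combine
  have hDN : (∫ t in (d₁ - r)..(d₁ + r), Real.sin t ^ m)
      ≤ 2 ^ n * ∫ t in (d₁ / 2 - r)..(d₁ / 2 + r), Real.sin t ^ m := by
    rw [← key]
    have h2n : (2:ℝ) ^ n = 2 * 2 ^ m := by
      rw [hm, ← pow_succ']
      congr 1
      omega
    rw [h2n]
    calc (2:ℝ) * ∫ s in ((d₁ - r)/2)..((d₁ + r)/2), Real.sin (2 * s) ^ m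
        ≤ 2 * ∫ s in ((d₁ - r)/2)..((d₁ + r)/2), (2 * Real.sin s) ^ m := by linarith
      _ = 2 * (2 ^ m * ∫ s in ((d₁ - r)/2)..((d₁ + r)/2), Real.sin s ^ m) := by rw [step2]
      _ ≤ 2 * (2 ^ m * ∫ t in (d₁ / 2 - r)..(d₁ / 2 + r), Real.sin t ^ m) := by
          have h2m : (0:ℝ) ≤ 2 ^ m := by positivity
          nlinarith
      _ = 2 * 2 ^ m * ∫ t in (d₁ / 2 - r)..(d₁ / 2 + r), Real.sin t ^ m := by ring
  rw [ge_iff_le, div_le_div_iff₀ (by positivity) hD]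
  nlinarith [pow_pos (show (0:ℝ) < 2 by norm_num) n]
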